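/- For every real y > 0, Σ_{n=1}^∞ 1/((2n)² + y²) = -1/(2y²) + (π/(4y))·coth(πy/2). -/

import Mathlib

open Real Complex Filter

noncomputable section
namespace CothAux

instance : Fact ((0:ℝ) < 2 * π) := ⟨by positivity⟩

variable (a : ℝ)

def g (x : ℝ) : ℂ := Complex.cosh (a * (x - π))

lemma g_cont : Continuous (g a) := by
  unfold g; fun_prop

lemma g_endpoints : g a 0 = g a (0 + 2 * π) := by
  unfold g
  push_cast
  rw [show (a:ℂ) * (0 - π) = -(a*π) by ring,
    show (a:ℂ) * (0 + 2*π - π) = a*π by ring, Complex.cosh_neg]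

def F : C(AddCircle (2 * π), ℂ) :=
  ⟨AddCircle.liftIco (2*π) 0 (g a),
    AddCircle.liftIco_continuous (g_endpoints a) ((g_cont a).continuousOn)⟩

lemma coeff_eq (n : ℤ) : fourierCoeff (F a : AddCircle (2*π) → ℂ) n =
    fourierCoeffOn (by positivity : (0:ℝ) < 0 + 2*π) (g a) n := by
  exact fourierCoeff_liftIco_eq (g a) n

lemma key_integrand (n : ℤ) (x : ℝ) :
    Complex.exp (2 * (π:ℂ) * I * ((-n : ℤ) : ℂ) * (x:ℝ) / ((0 + 2*π - 0 : ℝ) : ℂ)) * Complex.cosh ((a:ℂ) * ((x:ℝ) - (π:ℝ)))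
      = Complex.exp (-(a*π)) / 2 * Complex.exp (((a:ℂ) - n * I) * x)
        + Complex.exp ((a:ℂ)*π) / 2 * Complex.exp ((-(a:ℂ) - n * I) * x) := by
  have hπ : (π:ℂ) ≠ 0 := by exact_mod_cast Real.pi_ne_zero
  rw [Complex.cosh]
  push_cast
  rw [show 2 * (π:ℂ) * I * (-(n:ℂ)) * x / (0 + 2 * π - 0) = -(n * I * x) by field_simp; ring]
  field_simp
  rw [mul_add, ← Complex.exp_add, ← Complex.exp_add, ← Complex.exp_add, ← Complex.exp_add]
  congr 2 <;> ring

lemma c1_ne (ha : a ≠ 0) (n : ℤ) : ((a:ℂ) - n * I) ≠ 0 := by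
  intro h
  apply ha
  have := congrArg Complex.re h
  simpa using this

lemma c2_ne (ha : a ≠ 0) (n : ℤ) : (-(a:ℂ) - n * I) ≠ 0 := by
  intro h
  apply ha
  have := congrArg Complex.re h
  simp at this
  simpa using this

lemma coeff_val (ha : 0 < a) (n : ℤ) :
    fourierCoeffOn (by positivity : (0:ℝ) < 0 + 2*π) (fun x => Complex.cosh (a * (x - π))) n
      = ((a * Real.sinh (π * a) / (π * (a^2 + (n:ℝ)^2)) : ℝ) : ℂ) := by
  have hπ : (π:ℂ) ≠ 0 := by exact_mod_cast Real.pi_ne_zero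
  have hA : Complex.exp ((a:ℂ)*π) ≠ 0 := Complex.exp_ne_zero _
  have hc1 := c1_ne a ha.ne' n
  have hc2 := c2_ne a ha.ne' n
  rw [fourierCoeffOn_eq_integral]
  simp only [fourier_coe_apply, smul_eq_mul]
  simp only [key_integrand a n]
  rw [intervalIntegral.integral_add
      (Continuous.intervalIntegrable (by fun_prop) _ _)
      (Continuous.intervalIntegrable (by fun_prop) _ _),
    intervalIntegral.integral_const_mul, intervalIntegral.integral_const_mul,
    integral_exp_mul_complex hc1, integral_exp_mul_complex hc2]
  have e1 : Complex.exp (((a:ℂ) - n*I) * ((0 + 2*π : ℝ) : ℂ)) = Complex.exp ((a:ℂ)*π) * Complex.exp ((a:ℂ)*π) := by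
    rw [show ((a:ℂ) - n*I) * ((0 + 2*π : ℝ) : ℂ) = ((a:ℂ)*π + (a:ℂ)*π) + (↑(-n) * (2*π*I)) by push_cast; ring,
      Complex.exp_add, Complex.exp_int_mul_two_pi_mul_I, mul_one, Complex.exp_add]
  have e2 : Complex.exp ((-(a:ℂ) - n*I) * ((0 + 2*π : ℝ) : ℂ)) = (Complex.exp ((a:ℂ)*π) * Complex.exp ((a:ℂ)*π))⁻¹ := by
    rw [show (-(a:ℂ) - n*I) * ((0 + 2*π : ℝ) : ℂ) = -((a:ℂ)*π + (a:ℂ)*π) + (↑(-n) * (2*π*I)) by push_cast; ring,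
      Complex.exp_add, Complex.exp_int_mul_two_pi_mul_I, mul_one, Complex.exp_neg, Complex.exp_add]
  rw [e1, e2]
  simp only [Complex.ofReal_zero, mul_zero, Complex.exp_zero]
  rw [real_smul]
  push_cast [Complex.ofReal_sinh]
  rw [show (π:ℂ) * a = (a:ℂ) * π from mul_comm _ _, Complex.sinh]
  have hsum : ((a:ℂ)^2 + (n:ℂ)^2) ≠ 0 := by
    have : (0:ℝ) < a^2 + (n:ℝ)^2 := by positivity
    intro h
    rw [show ((a:ℂ)^2 + (n:ℂ)^2) = ((a^2 + (n:ℝ)^2 : ℝ) : ℂ) by push_cast; ring] at h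
    exact this.ne' (by exact_mod_cast h)
  rw [Complex.exp_neg]
  have huv : ((a:ℂ) - n*I) * (-(a:ℂ) - n*I) = -((a:ℂ)^2+(n:ℂ)^2) := by
    linear_combination (n:ℂ)^2 * Complex.I_sq
  have hdiff : ((a:ℂ) - n*I) - (-(a:ℂ) - n*I) = 2*(a:ℂ) := by ring
  generalize hu : ((a:ℂ) - n*I) = u at hc1 huv hdiff ⊢
  generalize hv : (-(a:ℂ) - n*I) = v at hc2 huv hdiff ⊢
  have hv2 : v = u - 2*(a:ℂ) := by linear_combination -hdiff
  subst hv2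
  have hn2 : ((n:ℂ))^2 = -(u*(u-2*(a:ℂ))) - (a:ℂ)^2 := by linear_combination huv
  rw [hn2] at hsum ⊢
  have hq1 : u * (u - 2*(a:ℂ)) ≠ 0 := mul_ne_zero hc1 hc2
  have hq2 : u^2 - 2*(a:ℂ)*u ≠ 0 := by intro h; apply hq1; linear_combination h
  have hq3 : -(u^2) + 2*(a:ℂ)*u ≠ 0 := by intro h; apply hq2; linear_combination -h
  have hq4 : 2*(a:ℂ)*u - u^2 ≠ 0 := by intro h; apply hq2; linear_combination -h
  field_simp [hπ, hA, hc1, hc2, hsum, hq1, hq2, hq3, hq4, Complex.exp_ne_zero]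
  have hD : ((-((a:ℂ) * (π:ℂ) * Complex.exp ((a:ℂ) * (π:ℂ)) ^ 3 * u * 16)
      + (π:ℂ) * Complex.exp ((a:ℂ) * (π:ℂ)) ^ 3 * u ^ 2 * 8) : ℂ) ≠ 0 := by
    have h8 : ((8:ℂ) * π * Complex.exp ((a:ℂ) * (π:ℂ)) ^ 3) * (u ^ 2 - 2*(a:ℂ)*u) ≠ 0 :=
      mul_ne_zero (mul_ne_zero (mul_ne_zero (by norm_num) hπ) (pow_ne_zero _ hA)) hq2
    intro h; apply h8; linear_combination h
  have hDval := mul_inv_cancel₀ hD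
  field_simp
  ring

lemma coeff_F_eq (ha : 0 < a) (n : ℤ) :
    fourierCoeff ((F a : C(AddCircle (2*π), ℂ)) : AddCircle (2*π) → ℂ) n
      = ((a * Real.sinh (π * a) / (π * (a^2 + (n:ℝ)^2)) : ℝ) : ℂ) := by
  rw [coeff_eq]; exact coeff_val a ha n

lemma summable_inv_sq_nat (ha : 0 < a) : Summable (fun n : ℕ => 1/(a^2 + (n:ℝ)^2)) := by
  rw [← summable_nat_add_iff 1]
  have hbound : Summable (fun n : ℕ => 1/((n:ℝ)+1)^2) := by
    have := (summable_nat_add_iff (f := fun n : ℕ => 1/(n:ℝ)^2) 1).mpr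
      (summable_one_div_nat_pow.mpr one_lt_two)
    refine this.congr fun n => by push_cast; ring
  refine Summable.of_nonneg_of_le (fun n => by positivity) (fun n => ?_) hbound
  apply one_div_le_one_div_of_le (by positivity)
  push_cast
  nlinarith [sq_nonneg a]

lemma summable_inv_sq_int (ha : 0 < a) : Summable (fun n : ℤ => 1/(a^2 + (n:ℝ)^2)) := by
  apply Summable.of_nat_of_neg
  · exact (summable_inv_sq_nat a ha).congr fun n => by norm_num
  · exact (summable_inv_sq_nat a ha).congr fun n => by push_cast; norm_num

lemma hassum_int (ha : 0 < a) :
    HasSum (fun n : ℤ => a * Real.sinh (π * a) / (π * (a^2 + (n:ℝ)^2)))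
      (Real.cosh (π * a)) := by
  have hsummable : Summable (fun n : ℤ => fourierCoeff ((F a : C(AddCircle (2*π), ℂ)) : AddCircle (2*π) → ℂ) n) := by
    simp only [coeff_F_eq a ha]
    apply Complex.summable_ofReal.mpr
    have := (summable_inv_sq_int a ha).mul_left (a * Real.sinh (π * a) / π)
    refine this.congr fun n => ?_
    field_simp
  have H := has_pointwise_sum_fourier_series_of_summable hsummable (0 : AddCircle (2*π))
  simp only [fourier_eval_zero, smul_eq_mul, mul_one, coeff_F_eq a ha] at H
  have hF0 : (F a) (0 : AddCircle (2*π)) = ((Real.cosh (π * a) : ℝ) : ℂ) := by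
    show AddCircle.liftIco (2*π) 0 (g a) (((0:ℝ) : AddCircle (2*π))) = _
    rw [AddCircle.liftIco_coe_apply (by constructor <;> [rfl; positivity])]
    rw [Complex.ofReal_cosh]
    unfold g
    push_cast
    rw [show (a:ℂ) * (0 - π) = -((π:ℂ)*a) by ring, Complex.cosh_neg]
  rw [hF0] at H
  exact Complex.hasSum_ofReal.mp H

lemma tsum_core (ha : 0 < a) :
    ∑' n : ℕ+, 1/(a^2 + (n:ℝ)^2)
      = -1/(2*a^2) + π/(2*a) * (Real.cosh (π*a)/Real.sinh (π*a)) := by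
  have hs : Real.sinh (π * a) ≠ 0 := by
    exact ne_of_gt (Real.sinh_pos_iff.mpr (by positivity))
  have hπ : (π:ℝ) ≠ 0 := Real.pi_ne_zero
  have hK : a * Real.sinh (π * a) ≠ 0 := mul_ne_zero ha.ne' hs
  set S : ℝ := π * Real.cosh (π * a) / (a * Real.sinh (π * a)) with hS
  have h1 : HasSum (fun n : ℤ => 1/(a^2 + (n:ℝ)^2)) S := by
    have h := (hassum_int a ha).mul_left (π / (a * Real.sinh (π * a)))
    rw [show π / (a * Real.sinh (π * a)) * Real.cosh (π * a) = S by rw [hS]; ring] at h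
    refine h.congr_fun fun n => ?_
    have hd : a^2 + (n:ℝ)^2 ≠ 0 := by positivity
    field_simp
  have h2 := h1.nat_add_neg
  have h3 : HasSum (fun n : ℕ => 2 * (1/(a^2 + (n:ℝ)^2))) (S + 1/a^2) := by
    rw [show S + 1/a^2 = (S + 1/(a^2 + ((0:ℤ):ℝ)^2)) by norm_num]
    refine h2.congr_fun fun n => ?_
    push_cast
    ring
  have h4 : HasSum (fun n : ℕ => 1/(a^2 + (n:ℝ)^2)) (S/2 + 1/(2*a^2)) := by
    have h := h3.div_const 2
    rw [show (S + 1/a^2)/2 = S/2 + 1/(2*a^2) by ring] at h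
    exact h.congr_fun fun n => by ring
  have h5 : HasSum (fun n : ℕ => 1/(a^2 + (((n:ℕ)+1:ℕ):ℝ)^2)) (S/2 - 1/(2*a^2)) := by
    refine (hasSum_nat_add_iff (f := fun n : ℕ => 1/(a^2 + (n:ℝ)^2)) 1).mpr ?_
    rw [show S/2 - 1/(2*a^2) + ∑ i ∈ Finset.range 1, (fun n : ℕ => 1/(a^2 + (n:ℝ)^2)) i
      = S/2 + 1/(2*a^2) by
        rw [Finset.sum_range_one]
        push_cast
        rw [show ((0:ℝ))^2 = 0 by norm_num, add_zero]
        ring]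
    exact h4
  have h6 : HasSum (fun n : ℕ+ => 1/(a^2 + (n:ℝ)^2)) (S/2 - 1/(2*a^2)) := by
    rw [← Equiv.pnatEquivNat.symm.hasSum_iff]
    refine h5.congr_fun fun n => ?_
    simp only [Function.comp_apply, Equiv.pnatEquivNat, Equiv.coe_fn_symm_mk]
    rw [show ((Nat.succPNat n : ℕ+) : ℕ) = n + 1 from Nat.succPNat_coe n]
  rw [h6.tsum_eq, hS]
  field_simp
  ring

end CothAux
end

open Real

theorem sum_inv_even_sq_add_sq (y : ℝ) (hy : 0 < y) :
    ∑' n : ℕ+, 1 / ((2 * (n : ℝ)) ^ 2 + y ^ 2) =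
      -1 / (2 * y ^ 2) + (π / (4 * y)) * (Real.cosh (π * y / 2) / Real.sinh (π * y / 2)) := by
  have ha : 0 < y/2 := by positivity
  have core := CothAux.tsum_core (y/2) ha
  rw [show π * (y/2) = π * y / 2 by ring] at core
  have hterm : ∀ n : ℕ+, 1 / ((2 * (n : ℝ)) ^ 2 + y ^ 2)
      = (1/4) * (1/((y/2)^2 + (n:ℝ)^2)) := by
    intro n
    have h1 : (2*(n:ℝ))^2 + y^2 ≠ 0 := by positivity
    have h2 : (y/2)^2 + (n:ℝ)^2 ≠ 0 := by positivity
    field_simp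
    ring
  rw [tsum_congr hterm, tsum_mul_left, core]
  have hs : Real.sinh (π * y / 2) ≠ 0 :=
    ne_of_gt (Real.sinh_pos_iff.mpr (by positivity))
  field_simp
  ring
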